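/- Let S ⊆ R^n be a finite set with lin(S) = R^n, and let Γ be a finite subgroup of GL_n(R) acting on S, with orbits O_1, ..., O_k. Then Fix_Γ(R^n) equals the linear span of the orbit barycenters β(O_1), ..., β(O_k); in particular dim Fix_Γ(R^n) ≤ k. -/

import Mathlib

set_option synthInstance.maxHeartbeats 400000
set_option maxHeartbeats 1000000

open MulAction Finset

instance matGLMulAction (n : ℕ) : MulAction (GL (Fin n) ℝ) (Fin n → ℝ) where
  smul γ v := γ.val.mulVec v
  one_smul v := show (1 : GL (Fin n) ℝ).val.mulVec v = v by
    simp [Units.val_one]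
  mul_smul γ δ v := show (γ * δ).val.mulVec v = γ.val.mulVec (δ.val.mulVec v) by
    simp [Units.val_mul, Matrix.mulVec_mulVec]

lemma avg_eq_barycenter (n : ℕ) (Γ : Subgroup (GL (Fin n) ℝ)) [Fintype Γ] (s : Fin n → ℝ) :
    (Fintype.card Γ : ℝ)⁻¹ • ∑ γ : Γ, γ • s
      = ((orbit Γ s).ncard : ℝ)⁻¹ • ∑ᶠ x ∈ orbit Γ s, x := by
  classical
  have hfin : (orbit Γ s).Finite := Set.finite_range _
  set t := hfin.toFinset with ht
  have hmaps : ∀ γ : Γ, γ ∈ (univ : Finset Γ) → γ • s ∈ t := by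
    intro γ _; rw [ht, Set.Finite.mem_toFinset]; exact mem_orbit _ _
  set c := (univ.filter (fun γ : Γ => γ • s = s)).card with hc
  have hfiber : ∀ y ∈ t, (univ.filter (fun γ : Γ => γ • s = y)).card = c := by
    intro y hy
    rw [ht, Set.Finite.mem_toFinset] at hy
    obtain ⟨δ, hδ⟩ := hy
    simp only [] at hδ
    replace hδ : δ • s = y := hδ
    refine Finset.card_bij' (fun γ _ => δ⁻¹ * γ) (fun γ _ => δ * γ) ?_ ?_ ?_ ?_
    · intro a ha
      simp only [mem_filter, mem_univ, true_and] at ha ⊢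
      rw [mul_smul, ha, ← hδ, inv_smul_smul]
    · intro a ha
      simp only [mem_filter, mem_univ, true_and] at ha ⊢
      rw [mul_smul, ha, hδ]
    · intro a _; simp
    · intro a _; simp
  have hsum : ∑ γ : Γ, γ • s = c • ∑ y ∈ t, y := by
    rw [← Finset.sum_fiberwise_of_maps_to hmaps (fun γ : Γ => (γ • s : Fin n → ℝ)),
      Finset.smul_sum]
    refine Finset.sum_congr rfl fun y hy => ?_
    rw [Finset.sum_congr rfl (fun γ hγ => (mem_filter.mp hγ).2), Finset.sum_const,
      hfiber y hy]
  have hcardΓ : Fintype.card Γ = t.card * c := by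
    rw [← Finset.card_univ, Finset.card_eq_sum_card_fiberwise hmaps,
      Finset.sum_congr rfl hfiber, Finset.sum_const, smul_eq_mul]
  have hc0 : c ≠ 0 := by
    rw [hc]
    refine Finset.card_ne_zero_of_mem (a := (1 : Γ)) ?_
    simp
  have ht0 : t.card ≠ 0 := by
    refine Finset.card_ne_zero_of_mem (a := s) ?_
    rw [ht, Set.Finite.mem_toFinset]; exact mem_orbit_self _
  have hfs : ∑ᶠ x ∈ orbit Γ s, x = ∑ x ∈ t, x := by
    rw [← finsum_mem_coe_finset, ht, Set.Finite.coe_toFinset]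
  have hnc : (orbit Γ s).ncard = t.card := Set.ncard_eq_toFinset_card _ hfin
  rw [hsum, hfs, hnc, ← Nat.cast_smul_eq_nsmul ℝ, smul_smul]
  congr 1
  rw [hcardΓ]
  field_simp
  push_cast
  ring


theorem fixed_space_spanned_by_orbit_barycenters
    (n : ℕ) (Γ : Subgroup (GL (Fin n) ℝ)) [Fintype Γ]
    (S : Set (Fin n → ℝ)) (hSfin : S.Finite)
    (hspan : Submodule.span ℝ S = ⊤)
    (hact : ∀ γ ∈ Γ, ∀ s ∈ S, γ.val.mulVec s ∈ S)
    (orb : (Fin n → ℝ) → Set (Fin n → ℝ))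
    (horb : ∀ s, orb s = {w | ∃ γ ∈ Γ, γ.val.mulVec s = w})
    (β : (Fin n → ℝ) → (Fin n → ℝ))
    (hβ : ∀ s, β s = ((orb s).ncard : ℝ)⁻¹ • ∑ᶠ x ∈ orb s, x) :
    {x | ∀ γ ∈ Γ, γ.val.mulVec x = x} = ↑(Submodule.span ℝ (β '' S)) ∧
    Module.finrank ℝ (Submodule.span ℝ (β '' S)) ≤ {O | ∃ s ∈ S, O = orb s}.ncard := by
  classical
  have horb' : ∀ s, orb s = orbit Γ s := by
    intro s
    rw [horb]
    ext w
    constructor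
    · rintro ⟨γ, hγ, rfl⟩; exact ⟨⟨γ, hγ⟩, rfl⟩
    · rintro ⟨⟨γ, hγ⟩, rfl⟩; exact ⟨γ, hγ, rfl⟩
  -- the fixed subspace as a submodule
  set F : Submodule ℝ (Fin n → ℝ) :=
    { carrier := {x | ∀ γ ∈ Γ, γ.val.mulVec x = x}
      add_mem' := by
        intro a b ha hb γ hγ
        rw [Matrix.mulVec_add, ha γ hγ, hb γ hγ]
      zero_mem' := by intro γ hγ; simp
      smul_mem' := by
        intro c x hx γ hγ
        rw [Matrix.mulVec_smul, hx γ hγ] } with hF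
  -- barycenters are fixed
  have hβfix : ∀ s, β s ∈ F := by
    intro s γ hγ
    have hfin : (orbit Γ s).Finite := Set.finite_range _
    have hfs : ∑ᶠ x ∈ orbit Γ s, x = ∑ x ∈ hfin.toFinset, x := by
      rw [← finsum_mem_coe_finset, Set.Finite.coe_toFinset]
    rw [hβ, horb', hfs]
    set γ' : Γ := ⟨γ, hγ⟩ with hγ'
    have key : ∑ x ∈ hfin.toFinset, γ' • x = ∑ x ∈ hfin.toFinset, x := by
      refine Finset.sum_nbij' (fun x => γ' • x) (fun y => γ'⁻¹ • y) ?_ ?_ ?_ ?_ ?_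
      · intro a ha
        rw [Set.Finite.mem_toFinset] at ha ⊢
        rw [← MulAction.smul_orbit γ' s]
        exact Set.smul_mem_smul_set ha
      · intro a ha
        rw [Set.Finite.mem_toFinset] at ha ⊢
        rw [← MulAction.smul_orbit γ'⁻¹ s]
        exact Set.smul_mem_smul_set ha
      · intro a _; simp
      · intro a _; simp
      · intro a _; rfl
    calc γ.val.mulVec (((orbit Γ s).ncard : ℝ)⁻¹ • ∑ x ∈ hfin.toFinset, x)
        = ((orbit Γ s).ncard : ℝ)⁻¹ • ∑ x ∈ hfin.toFinset, γ' • x := by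
          rw [Matrix.mulVec_smul]
          congr 1
          show (Matrix.mulVecLin γ.val) (∑ x ∈ hfin.toFinset, x) = _
          rw [map_sum]
          rfl
      _ = ((orbit Γ s).ncard : ℝ)⁻¹ • ∑ x ∈ hfin.toFinset, x := by rw [key]
  -- averaging operator
  set P : (Fin n → ℝ) →ₗ[ℝ] (Fin n → ℝ) :=
    (Fintype.card Γ : ℝ)⁻¹ • ∑ γ : Γ, Matrix.mulVecLin (γ : GL (Fin n) ℝ).val with hP
  have hPapp : ∀ v, P v = (Fintype.card Γ : ℝ)⁻¹ • ∑ γ : Γ, γ • v := by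
    intro v
    rw [hP]
    simp only [LinearMap.smul_apply, LinearMap.coe_sum, Finset.sum_apply,
      Matrix.mulVecLin_apply]
    rfl
  have hPs : ∀ s, P s = β s := by
    intro s
    rw [hPapp, hβ, horb']
    exact avg_eq_barycenter n Γ s
  have hcΓ : (Fintype.card Γ : ℝ) ≠ 0 := by
    exact_mod_cast Fintype.card_ne_zero
  have hPfix : ∀ x ∈ F, P x = x := by
    intro x hx
    rw [hPapp]
    have : ∀ γ : Γ, (γ • x : Fin n → ℝ) = x := fun γ => hx γ.val γ.2
    rw [Finset.sum_congr rfl (fun γ _ => this γ), Finset.sum_const, Finset.card_univ,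
      ← Nat.cast_smul_eq_nsmul ℝ, smul_smul, inv_mul_cancel₀ hcΓ, one_smul]
  -- first part
  have hsub1 : Submodule.span ℝ (β '' S) ≤ F := by
    rw [Submodule.span_le]
    rintro _ ⟨s, _, rfl⟩
    exact hβfix s
  have hsub2 : ∀ x ∈ F, x ∈ Submodule.span ℝ (β '' S) := by
    intro x hx
    have hxS : x ∈ Submodule.span ℝ S := by rw [hspan]; trivial
    have : P x ∈ Submodule.map P (Submodule.span ℝ S) := Submodule.mem_map_of_mem hxS
    rw [Submodule.map_span] at this
    rw [← hPfix x hx]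
    have himg : P '' S = β '' S := by
      apply Set.image_congr
      intro s _
      exact hPs s
    rwa [himg] at this
  have hpart1 : {x | ∀ γ ∈ Γ, γ.val.mulVec x = x} = ↑(Submodule.span ℝ (β '' S)) := by
    apply Set.Subset.antisymm
    · intro x hx; exact hsub2 x hx
    · intro x hx; exact hsub1 hx
  refine ⟨hpart1, ?_⟩
  -- second part
  have horbset : {O | ∃ s ∈ S, O = orb s} = orb '' S := by
    ext O; simp [eq_comm]
  have hβg : β '' S = (fun O : Set (Fin n → ℝ) => ((O.ncard : ℝ)⁻¹ • ∑ᶠ x ∈ O, x)) '' (orb '' S) := by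
    rw [← Set.image_comp]
    exact Set.image_congr fun s _ => hβ s
  have hβfin : (β '' S).Finite := hSfin.image _
  letI := hβfin.fintype
  have h1 : Module.finrank ℝ (Submodule.span ℝ (β '' S)) ≤ (β '' S).ncard := by
    rw [Set.ncard_eq_toFinset_card']
    exact finrank_span_le_card _
  have h2 : (β '' S).ncard ≤ (orb '' S).ncard := by
    rw [hβg]
    exact Set.ncard_image_le (hSfin.image _)
  rw [horbset]
  exact h1.trans h2
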